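/- arXiv:2103.09549 — 4 statements merged into one kernel-verified Lean document; each statement's English description precedes it below -/
import Mathlib

section
/- Let A be an abelian category and let (T',F') and (T,F) be torsion pairs in A with T' ⊆ T. Then: (1) every object M ∈ T fits into a short exact sequence 0 → T₀ → M → H → 0 with T₀ ∈ T' and H ∈ T ∩ F'; (2) every object M ∈ F' fits into a short exact sequence 0 → H → M → F₀ → 0 with H ∈ T ∩ F' and F₀ ∈ F. Conversely, any object admitting a short exact sequence as in (1) lies in T, and any object admitting a short exact sequence as in (2) lies in F'. -/
open CategoryTheory Limits

universe v u

variable (A : Type u) [Category.{v} A] [Abelian A]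

/-- A class of objects closed under isomorphisms. -/
def IsoClosed (S : Set A) : Prop := ∀ ⦃X Y : A⦄, (X ≅ Y) → X ∈ S → Y ∈ S

/-- `f`, `g` form a short exact sequence `0 → X → Y → Z → 0`. -/
def IsSES {X Y Z : A} (f : X ⟶ Y) (g : Y ⟶ Z) : Prop :=
  ∃ w : f ≫ g = 0, (ShortComplex.mk f g w).ShortExact

/-- A torsion pair in the abelian category `A`: a pair of iso-closed classes with
`Hom(T, F) = 0` such that every object sits in a short exact sequence with kernel in `T`
and cokernel in `F`. -/
def IsTorsionPair (T F : Set A) : Prop :=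
  IsoClosed A T ∧ IsoClosed A F ∧
  (∀ X ∈ T, ∀ Y ∈ F, ∀ f : X ⟶ Y, f = 0) ∧
  (∀ M : A, ∃ (X Y : A) (f : X ⟶ M) (g : M ⟶ Y), IsSES A f g ∧ X ∈ T ∧ Y ∈ F)

/-- `star X Y` is the class of objects `M` admitting a short exact sequence
`0 → B → M → C → 0` with `B ∈ X` and `C ∈ Y`. -/
def star (X Y : Set A) : Set A :=
  {M : A | ∃ (B C : A) (f : B ⟶ M) (g : M ⟶ C), IsSES A f g ∧ B ∈ X ∧ C ∈ Y}

/-- In a short exact sequence, if the second map vanishes, the first is an iso. -/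
lemma isIso_f_of_g_zero {X Y Z : A} {f : X ⟶ Y} {g : Y ⟶ Z}
    (hses : IsSES A f g) (hg : g = 0) : IsIso f := by
  obtain ⟨w, hse⟩ := hses
  have hm : Mono f := hse.mono_f
  have he : Epi f := hse.exact.epi_f hg
  exact isIso_of_mono_of_epi f

/-- In a short exact sequence, if the first map vanishes, the second is an iso. -/
lemma isIso_g_of_f_zero {X Y Z : A} {f : X ⟶ Y} {g : Y ⟶ Z}
    (hses : IsSES A f g) (hf : f = 0) : IsIso g := by
  obtain ⟨w, hse⟩ := hses
  have he : Epi g := hse.epi_g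
  have hm : Mono g := hse.exact.mono_g hf
  exact isIso_of_mono_of_epi g

/-- Descend through the cokernel of a short exact sequence. -/
lemma ses_desc {X Y Z Q : A} {f : X ⟶ Y} {g : Y ⟶ Z}
    (hses : IsSES A f g) (p : Y ⟶ Q) (hp : f ≫ p = 0) :
    ∃ q : Z ⟶ Q, g ≫ q = p := by
  obtain ⟨w, hse⟩ := hses
  have he : Epi g := hse.epi_g
  exact hse.exact.desc' p hp

/-- Lift through the kernel of a short exact sequence. -/
lemma ses_lift {X Y Z Q : A} {f : X ⟶ Y} {g : Y ⟶ Z}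
    (hses : IsSES A f g) (p : Q ⟶ Y) (hp : p ≫ g = 0) :
    ∃ q : Q ⟶ X, q ≫ f = p := by
  obtain ⟨w, hse⟩ := hses
  have hm : Mono f := hse.mono_f
  exact hse.exact.lift' p hp

/-- Lemma on hearts, abelian version.
Let `(T', F')` and `(T, F)` be torsion pairs in the abelian category `A` with `T' ⊆ T`.
Then an object lies in `T` if and only if it admits a short exact sequence
`0 → T₀ → M → H → 0` with `T₀ ∈ T'` and `H ∈ T ∩ F'`, and an object lies in `F'` if and
only if it admits a short exact sequence `0 → H → M → F₀ → 0` with `H ∈ T ∩ F'` and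
`F₀ ∈ F`. -/
theorem stmt10 (T' F' T F : Set A)
    (h' : IsTorsionPair A T' F') (h : IsTorsionPair A T F) (hsub : T' ⊆ T) :
    T = star A T' (T ∩ F') ∧ F' = star A (T ∩ F') F := by
  obtain ⟨hT'iso, hF'iso, hHom', hdec'⟩ := h'
  obtain ⟨hTiso, hFiso, hHom, hdec⟩ := h
  constructor
  · apply Set.eq_of_subset_of_subset
    · -- T ⊆ T' * (T ∩ F')
      intro M hM
      obtain ⟨T₀, H, f, g, hses, hT₀, hH⟩ := hdec' M
      refine ⟨T₀, H, f, g, hses, hT₀, ?_, hH⟩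
      -- H ∈ T : decompose H with (T, F)
      obtain ⟨tH, fH, i, p, hses2, htH, hfH⟩ := hdec H
      have hp : p = 0 := by
        have hgp : g ≫ p = 0 := hHom M hM fH hfH (g ≫ p)
        have : Epi g := hses.2.epi_g
        exact (cancel_epi g).mp (by rw [hgp, comp_zero])
      have : IsIso i := isIso_f_of_g_zero A hses2 hp
      exact hTiso (asIso i) htH
    · -- T' * (T ∩ F') ⊆ T
      rintro M ⟨T₀, H, f, g, hses, hT₀, ⟨hHT, _⟩⟩
      obtain ⟨tM, fM, i, p, hses2, htM, hfM⟩ := hdec M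
      have hfp : f ≫ p = 0 := hHom T₀ (hsub hT₀) fM hfM (f ≫ p)
      obtain ⟨q, hq⟩ := ses_desc A hses p hfp
      have hq0 : q = 0 := hHom H hHT fM hfM q
      have hp : p = 0 := by rw [← hq, hq0, comp_zero]
      have : IsIso i := isIso_f_of_g_zero A hses2 hp
      exact hTiso (asIso i) htM
  · apply Set.eq_of_subset_of_subset
    · -- F' ⊆ (T ∩ F') * F
      intro M hM
      obtain ⟨tM, fM, i, p, hses, htM, hfM⟩ := hdec M
      refine ⟨tM, fM, i, p, hses, ⟨htM, ?_⟩, hfM⟩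
      -- tM ∈ F' : decompose tM with (T', F')
      obtain ⟨t', f', a, b, hses2, ht', hf'⟩ := hdec' tM
      have ha : a = 0 := by
        have hai : (a ≫ i) = 0 := hHom' t' ht' M hM (a ≫ i)
        have : Mono i := hses.2.mono_f
        exact (cancel_mono i).mp (by rw [hai, zero_comp])
      have : IsIso b := isIso_g_of_f_zero A hses2 ha
      exact hF'iso (asIso b).symm hf'
    · -- (T ∩ F') * F ⊆ F'
      rintro M ⟨H, F₀, f, g, hses, ⟨_, hHF'⟩, hF₀⟩
      obtain ⟨t', f'M, a, b, hses2, ht', hf'⟩ := hdec' M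
      have hag : a ≫ g = 0 := hHom t' (hsub ht') F₀ hF₀ (a ≫ g)
      obtain ⟨q, hq⟩ := ses_lift A hses a hag
      have hq0 : q = 0 := hHom' t' ht' H hHF' q
      have ha : a = 0 := by rw [← hq, hq0, zero_comp]
      have : IsIso b := isIso_g_of_f_zero A hses2 ha
      exact hF'iso (asIso b).symm hf'
end

section
/- Let A be an abelian category, let t₁ = (T₁,F₁) and t₂ = (T₂,F₂) be torsion pairs in A with T₁ ⊆ T₂, and set H = T₂ ∩ F₁. If (T,F) is a torsion pair in A with T₁ ⊆ T ⊆ T₂, then (T ∩ F₁, T₂ ∩ F) is a torsion pair in H; that is, both classes are contained in H, Hom_A(X,Y) = 0 for all X ∈ T ∩ F₁ and Y ∈ T₂ ∩ F, and every object H₀ ∈ H fits into a short exact sequence 0 → X → H₀ → Y → 0 with X ∈ T ∩ F₁ and Y ∈ T₂ ∩ F. -/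
open CategoryTheory Limits

universe v u

variable (A : Type u) [Category.{v} A] [Abelian A]

section Aux

variable {A}

/-- If the source of a SES is zero, the second map is an isomorphism. -/
lemma isIso_of_src_isZero {X Y Z : A} {f : X ⟶ Y} {g : Y ⟶ Z}
    (h : IsSES A f g) (hX : IsZero X) : IsIso g := by
  obtain ⟨w, hse⟩ := h
  haveI : Epi (ShortComplex.mk f g w).g := hse.epi_g
  haveI : Mono (ShortComplex.mk f g w).g := hse.exact.mono_g (hX.eq_of_src f 0)
  exact isIso_of_mono_of_epi g

/-- If the target of a SES is zero, the first map is an isomorphism. -/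
lemma isIso_of_tgt_isZero {X Y Z : A} {f : X ⟶ Y} {g : Y ⟶ Z}
    (h : IsSES A f g) (hZ : IsZero Z) : IsIso f := by
  obtain ⟨w, hse⟩ := h
  haveI : Mono (ShortComplex.mk f g w).f := hse.mono_f
  haveI : Epi (ShortComplex.mk f g w).f := hse.exact.epi_f (hZ.eq_of_tgt g 0)
  exact isIso_of_mono_of_epi f

/-- A torsion-free class is closed under subobjects. -/
lemma mem_free_of_mono {T₁ F₁ : Set A} (h₁ : IsTorsionPair A T₁ F₁)
    {X M : A} (i : X ⟶ M) [Mono i] (hM : M ∈ F₁) : X ∈ F₁ := by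
  obtain ⟨_, hFc, hvan, hdec⟩ := h₁
  obtain ⟨T', F', f, g, hses, hT', hF'⟩ := hdec X
  obtain ⟨w, hse⟩ := hses
  haveI : Mono f := hse.mono_f
  have hz : f ≫ i = 0 := hvan T' hT' M hM (f ≫ i)
  have hT'z : IsZero T' := IsZero.of_mono_eq_zero (f ≫ i) hz
  haveI : IsIso g := isIso_of_src_isZero ⟨w, hse⟩ hT'z
  exact hFc (asIso g).symm hF'

/-- A torsion class is closed under quotients. -/
lemma mem_tors_of_epi {T₂ F₂ : Set A} (h₂ : IsTorsionPair A T₂ F₂)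
    {M Y : A} (p : M ⟶ Y) [Epi p] (hM : M ∈ T₂) : Y ∈ T₂ := by
  obtain ⟨hTc, _, hvan, hdec⟩ := h₂
  obtain ⟨T', F', f, g, hses, hT', hF'⟩ := hdec Y
  obtain ⟨w, hse⟩ := hses
  haveI : Epi g := hse.epi_g
  have hz : p ≫ g = 0 := hvan M hM F' hF' (p ≫ g)
  have hF'z : IsZero F' := IsZero.of_epi_eq_zero (p ≫ g) hz
  haveI : IsIso f := isIso_of_tgt_isZero ⟨w, hse⟩ hF'z
  exact hTc (asIso f) hT'

end Aux

/-- the map `Φ` is well defined, abelian version.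
Let `t₁ = (T₁, F₁) ≤ t₂ = (T₂, F₂)` be torsion pairs in `A` and `H = T₂ ∩ F₁`.  If `(T, F)`
is a torsion pair with `T₁ ⊆ T ⊆ T₂`, then `(T ∩ F₁, T₂ ∩ F)` is a torsion pair in `H`:
both classes are contained in `H`, `Hom(T ∩ F₁, T₂ ∩ F) = 0`, and every object of `H` sits
in a short exact sequence with kernel in `T ∩ F₁` and cokernel in `T₂ ∩ F`. -/
theorem stmt11 (T₁ F₁ T₂ F₂ T F : Set A)
    (h₁ : IsTorsionPair A T₁ F₁) (h₂ : IsTorsionPair A T₂ F₂)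
    (h : IsTorsionPair A T F)
    (h12 : T₁ ⊆ T₂) (hl : T₁ ⊆ T) (hr : T ⊆ T₂) :
    T ∩ F₁ ⊆ T₂ ∩ F₁ ∧
    T₂ ∩ F ⊆ T₂ ∩ F₁ ∧
    (∀ X ∈ T ∩ F₁, ∀ Y ∈ T₂ ∩ F, ∀ f : X ⟶ Y, f = 0) ∧
    (∀ H₀ ∈ T₂ ∩ F₁, ∃ (X Y : A) (f : X ⟶ H₀) (g : H₀ ⟶ Y),
      IsSES A f g ∧ X ∈ T ∩ F₁ ∧ Y ∈ T₂ ∩ F) := by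
  -- F ⊆ F₁
  have hFF₁ : F ⊆ F₁ := by
    intro Y hY
    obtain ⟨_, hF₁c, _, hdec₁⟩ := h₁
    obtain ⟨T', F', f, g, hses, hT', hF'⟩ := hdec₁ Y
    obtain ⟨w, hse⟩ := hses
    haveI : Mono f := hse.mono_f
    have hz : f = 0 := h.2.2.1 T' (hl hT') Y hY f
    have hT'z : IsZero T' := IsZero.of_mono_eq_zero f hz
    haveI : IsIso g := isIso_of_src_isZero ⟨w, hse⟩ hT'z
    exact hF₁c (asIso g).symm hF'
  refine ⟨fun X hX => ⟨hr hX.1, hX.2⟩, fun Y hY => ⟨hY.1, hFF₁ hY.2⟩, ?_, ?_⟩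
  · intro X hX Y hY f
    exact h.2.2.1 X hX.1 Y hY.2 f
  · intro H₀ hH₀
    obtain ⟨X, Y, f, g, hses, hX, hY⟩ := h.2.2.2 H₀
    obtain ⟨w, hse⟩ := hses
    haveI : Mono f := hse.mono_f
    haveI : Epi g := hse.epi_g
    exact ⟨X, Y, f, g, ⟨w, hse⟩, ⟨hX, mem_free_of_mono h₁ f hH₀.2⟩,
      ⟨mem_tors_of_epi h₂ g hH₀.1, hY⟩⟩
end

section
/- Let A be an abelian category, let t₁ = (T₁,F₁) and t₂ = (T₂,F₂) be torsion pairs in A with T₁ ⊆ T₂, and set H = T₂ ∩ F₁. If (X,Y) is a torsion pair in H, then (T₁∗X, Y∗F₂) is a torsion pair in A satisfying T₁ ⊆ T₁∗X ⊆ T₂, where T₁∗X denotes the class of objects M admitting a short exact sequence 0 → U → M → X → 0 with U ∈ T₁ and X ∈ X, and Y∗F₂ denotes the class of objects M admitting a short exact sequence 0 → Y → M → V → 0 with Y ∈ Y and V ∈ F₂. -/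
open CategoryTheory Limits

universe v u

variable (A : Type u) [Category.{v} A] [Abelian A]

/-- A torsion pair in a class `H` of objects of `A`: a pair of iso-closed subclasses
`(X, Y)` of `H` such that `Hom(X, Y) = 0` and every object of `H` sits in a short exact
sequence with kernel in `X` and cokernel in `Y`. -/
def IsTorsionPairIn (H X Y : Set A) : Prop :=
  X ⊆ H ∧ Y ⊆ H ∧ IsoClosed A X ∧ IsoClosed A Y ∧
  (∀ B ∈ X, ∀ C ∈ Y, ∀ f : B ⟶ C, f = 0) ∧
  (∀ H₀ ∈ H, ∃ (B C : A) (f : B ⟶ H₀) (g : H₀ ⟶ C),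
    IsSES A f g ∧ B ∈ X ∧ C ∈ Y)

section Aux

open CategoryTheory.Abelian CategoryTheory.Abelian.Pseudoelement ZeroObject

variable {A}

lemma ses_w {X Y Z : A} {f : X ⟶ Y} {g : Y ⟶ Z} (h : IsSES A f g) : f ≫ g = 0 := h.choose

lemma ses_mono {X Y Z : A} {f : X ⟶ Y} {g : Y ⟶ Z} (h : IsSES A f g) : Mono f :=
  h.choose_spec.mono_f

lemma ses_epi {X Y Z : A} {f : X ⟶ Y} {g : Y ⟶ Z} (h : IsSES A f g) : Epi g :=
  h.choose_spec.epi_g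

lemma ses_pe {X Y Z : A} {f : X ⟶ Y} {g : Y ⟶ Z} (h : IsSES A f g) :
    ∀ b, pseudoApply g b = 0 → ∃ a, pseudoApply f a = b := by
  obtain ⟨w, hS⟩ := h
  exact pseudo_exact_of_exact hS.exact

lemma sesMk {X Y Z : A} (f : X ⟶ Y) (g : Y ⟶ Z) (w : f ≫ g = 0)
    (hm : Mono f) (he : Epi g)
    (hpe : ∀ b, pseudoApply g b = 0 → ∃ a, pseudoApply f a = b) : IsSES A f g :=
  ⟨w, { exact := exact_of_pseudo_exact (ShortComplex.mk f g w) hpe,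
        mono_f := hm, epi_g := he }⟩

lemma ses_desc_s12 {X Y Z : A} {f : X ⟶ Y} {g : Y ⟶ Z} (h : IsSES A f g) {W : A}
    (φ : Y ⟶ W) (hφ : f ≫ φ = 0) : ∃ ψ : Z ⟶ W, g ≫ ψ = φ := by
  obtain ⟨w, hS⟩ := h
  obtain ⟨ψ, hψ⟩ := CokernelCofork.IsColimit.desc' hS.gIsCokernel φ hφ
  exact ⟨ψ, hψ⟩

lemma ses_lift_s12 {X Y Z : A} {f : X ⟶ Y} {g : Y ⟶ Z} (h : IsSES A f g) {W : A}
    (φ : W ⟶ Y) (hφ : φ ≫ g = 0) : ∃ ψ : W ⟶ X, ψ ≫ f = φ := by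
  obtain ⟨w, hS⟩ := h
  obtain ⟨ψ, hψ⟩ := KernelFork.IsLimit.lift' hS.fIsKernel φ hφ
  exact ⟨ψ, hψ⟩

lemma ses_kernel {Y Z : A} (g : Y ⟶ Z) [Epi g] : IsSES A (kernel.ι g) g :=
  ⟨kernel.condition g, { exact := ShortComplex.exact_of_f_is_kernel _ (kernelIsKernel g) }⟩

lemma ses_cokernel {X Y : A} (f : X ⟶ Y) [Mono f] : IsSES A f (cokernel.π f) :=
  ⟨cokernel.condition f, { exact := ShortComplex.exact_of_g_is_cokernel _ (cokernelIsCokernel f) }⟩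

lemma ses_of_iso {X Y Y' Z : A} {f : X ⟶ Y} {g : Y ⟶ Z} (h : IsSES A f g) (e : Y ≅ Y') :
    IsSES A (f ≫ e.hom) (e.inv ≫ g) := by
  obtain ⟨w, hS⟩ := h
  have w' : (f ≫ e.hom) ≫ e.inv ≫ g = 0 := by simp [reassoc_of% w, w]
  exact ⟨w', ShortComplex.shortExact_of_iso
    (ShortComplex.isoMk (Iso.refl X) e (Iso.refl Z) (by simp) (by simp) :
      ShortComplex.mk f g w ≅ ShortComplex.mk (f ≫ e.hom) (e.inv ≫ g) w') hS⟩

lemma apply_id' {P : A} (a : Pseudoelement P) : pseudoApply (𝟙 P) a = a :=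
  Quotient.inductionOn a fun x => Quotient.sound
    ⟨x.left, 𝟙 _, 𝟙 _, ⟨fun _ _ h => (Category.id_comp _).symm.trans (h.trans (Category.id_comp _))⟩, ⟨fun _ _ h => (Category.id_comp _).symm.trans (h.trans (Category.id_comp _))⟩, by simp [app]⟩

lemma ses_id_zero (T : A) : IsSES A (𝟙 T) (0 : T ⟶ 0) := by
  have he : Epi (0 : T ⟶ (0 : A)) := ⟨fun g h _ => (isZero_zero A).eq_of_src g h⟩
  exact sesMk _ _ (by simp) inferInstance he (fun b _ => ⟨b, apply_id' b⟩)

lemma mem_left_of_orth {T F : Set A} (h : IsTorsionPair A T F) {M : A}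
    (hM : ∀ F' ∈ F, ∀ f : M ⟶ F', f = 0) : M ∈ T := by
  obtain ⟨B, C, f, g, hses, hB, hC⟩ := h.2.2.2 M
  have hg : g = 0 := hM C hC g
  have hm : Mono f := ses_mono hses
  have he : Epi f := epi_of_pseudo_surjective f (fun b =>
    ses_pe hses b (by rw [hg]; exact zero_apply _ _))
  have : IsIso f := isIso_of_mono_of_epi f
  exact h.1 (asIso f) hB

lemma mem_right_of_orth {T F : Set A} (h : IsTorsionPair A T F) {M : A}
    (hM : ∀ T' ∈ T, ∀ f : T' ⟶ M, f = 0) : M ∈ F := by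
  obtain ⟨B, C, f, g, hses, hB, hC⟩ := h.2.2.2 M
  have hf : f = 0 := hM B hB f
  have he : Epi g := ses_epi hses
  have hm : Mono g := mono_of_zero_of_map_zero g (fun b hb => by
    obtain ⟨a, ha⟩ := ses_pe hses b hb
    rw [← ha, hf]; exact zero_apply _ _)
  have : IsIso g := isIso_of_mono_of_epi g
  exact h.2.1 (asIso g).symm hC

lemma lemA {U T H₀ X₀ Y₀ : A} {u : U ⟶ T} {q : T ⟶ H₀} {x : X₀ ⟶ H₀} {r : H₀ ⟶ Y₀}
    (h1 : IsSES A u q) (h2 : IsSES A x r) :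
    ∃ (u' : U ⟶ kernel (q ≫ r)) (t : kernel (q ≫ r) ⟶ X₀), IsSES A u' t := by
  have hw1 := ses_w h1
  have hw2 := ses_w h2
  have hq : Epi q := ses_epi h1
  have hr : Epi r := ses_epi h2
  have hx : Mono x := ses_mono h2
  have hu : Mono u := ses_mono h1
  have hqr : Epi (q ≫ r) := epi_comp _ _
  have hu0 : u ≫ q ≫ r = 0 := by rw [← Category.assoc, hw1, zero_comp]
  set ι := kernel.ι (q ≫ r) with hι
  obtain ⟨t, ht⟩ := ses_lift_s12 h2 (ι ≫ q)
    (by rw [Category.assoc, kernel.condition])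
  have hlift : kernel.lift (q ≫ r) u hu0 ≫ ι = u := kernel.lift_ι _ _ _
  have hm : Mono (kernel.lift (q ≫ r) u hu0) := mono_of_mono_fac hlift
  have hK : IsSES A ι (q ≫ r) := ses_kernel _
  have hte : Epi t := epi_of_pseudo_surjective t (fun x₀ => by
    obtain ⟨tt, htt⟩ := pseudo_surjective_of_epi q (pseudoApply x x₀)
    have h0 : pseudoApply (q ≫ r) tt = 0 := by
      rw [Pseudoelement.comp_apply, htt, ← Pseudoelement.comp_apply, hw2]
      exact zero_apply _ _
    obtain ⟨n, hn⟩ := ses_pe hK tt h0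
    refine ⟨n, pseudo_injective_of_mono x ?_⟩
    rw [← Pseudoelement.comp_apply, ht, Pseudoelement.comp_apply, hn, htt])
  have hw : kernel.lift (q ≫ r) u hu0 ≫ t = 0 := by
    rw [← cancel_mono x, Category.assoc, ht, ← Category.assoc, hlift, hw1, zero_comp]
  refine ⟨_, t, sesMk _ _ hw hm hte (fun b hb => ?_)⟩
  have h0 : pseudoApply q (pseudoApply ι b) = 0 := by
    rw [← Pseudoelement.comp_apply, ← ht, Pseudoelement.comp_apply, hb, apply_zero]
  obtain ⟨a, ha⟩ := ses_pe h1 (pseudoApply ι b) h0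
  refine ⟨a, pseudo_injective_of_mono ι ?_⟩
  rw [← Pseudoelement.comp_apply, hlift, ha]

lemma lemB {N T Y₀ M F : A} {k : N ⟶ T} {s : T ⟶ Y₀} {i : T ⟶ M} {p : M ⟶ F}
    (h1 : IsSES A k s) (h2 : IsSES A i p) :
    ∃ (j : Y₀ ⟶ cokernel (k ≫ i)) (e : cokernel (k ≫ i) ⟶ F), IsSES A j e := by
  have hi : Mono i := ses_mono h2
  have hs : Epi s := ses_epi h1
  have hk : Mono k := ses_mono h1
  have hp : Epi p := ses_epi h2
  have hmki : Mono (k ≫ i) := mono_comp _ _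
  set c := cokernel.π (k ≫ i) with hc
  have hC : IsSES A (k ≫ i) c := ses_cokernel _
  obtain ⟨j, hj⟩ := ses_desc_s12 h1 (i ≫ c)
    (by rw [← Category.assoc, cokernel.condition])
  have hce : c ≫ cokernel.desc (k ≫ i) p (by rw [Category.assoc, ses_w h2, comp_zero]) = p :=
    cokernel.π_desc _ _ _
  set e := cokernel.desc (k ≫ i) p (by rw [Category.assoc, ses_w h2, comp_zero]) with he
  have hepie : Epi e := epi_of_epi_fac hce
  have hmonoj : Mono j := mono_of_zero_of_map_zero j (fun y hy => by
    obtain ⟨tt, htt⟩ := pseudo_surjective_of_epi s y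
    have hz : pseudoApply c (pseudoApply i tt) = 0 := by
      rw [← Pseudoelement.comp_apply, ← hj, Pseudoelement.comp_apply, htt, hy]
    obtain ⟨n, hn⟩ := ses_pe hC (pseudoApply i tt) hz
    have hkn : pseudoApply k n = tt :=
      pseudo_injective_of_mono i (by rw [← Pseudoelement.comp_apply, hn])
    rw [← htt, ← hkn, ← Pseudoelement.comp_apply, ses_w h1]
    exact zero_apply _ _)
  have hw : j ≫ e = 0 := by
    rw [← cancel_epi s, ← Category.assoc, hj, Category.assoc, hce, ses_w h2, comp_zero]
  refine ⟨j, e, sesMk _ _ hw hmonoj hepie (fun b hb => ?_)⟩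
  obtain ⟨m, hm⟩ := pseudo_surjective_of_epi c b
  have h0 : pseudoApply p m = 0 := by rw [← hce, Pseudoelement.comp_apply, hm, hb]
  obtain ⟨tt, htt⟩ := ses_pe h2 m h0
  exact ⟨pseudoApply s tt, by
    rw [← Pseudoelement.comp_apply, hj, Pseudoelement.comp_apply, htt, hm]⟩

end Aux

open ZeroObject in
/-- the map `Ψ` is well defined, abelian version.
Let `t₁ = (T₁, F₁) ≤ t₂ = (T₂, F₂)` be torsion pairs in `A` and `H = T₂ ∩ F₁`.  If `(X, Y)`
is a torsion pair in `H`, then `(T₁ ∗ X, Y ∗ F₂)` is a torsion pair in `A` with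
`T₁ ⊆ T₁ ∗ X ⊆ T₂`. -/
theorem stmt12 (T₁ F₁ T₂ F₂ : Set A)
    (h₁ : IsTorsionPair A T₁ F₁) (h₂ : IsTorsionPair A T₂ F₂) (h12 : T₁ ⊆ T₂)
    (X Y : Set A) (hXY : IsTorsionPairIn A (T₂ ∩ F₁) X Y) :
    IsTorsionPair A (star A T₁ X) (star A Y F₂) ∧
    T₁ ⊆ star A T₁ X ∧ star A T₁ X ⊆ T₂ := by
  have hXT₂ : X ⊆ T₂ := fun Z hZ => (hXY.1 hZ).1
  have hYF₁ : Y ⊆ F₁ := fun Z hZ => (hXY.2.1 hZ).2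
  -- the zero object belongs to `X`
  have h0H : (0 : A) ∈ T₂ ∩ F₁ :=
    ⟨mem_left_of_orth h₂ (fun F' _ f => (isZero_zero A).eq_of_src f 0),
     mem_right_of_orth h₁ (fun T' _ f => (isZero_zero A).eq_of_tgt f 0)⟩
  have h0X : (0 : A) ∈ X := by
    obtain ⟨B, C, f, g, hses, hB, hC⟩ := hXY.2.2.2.2.2 0 h0H
    have hf0 : f = 0 := (isZero_zero A).eq_of_tgt f 0
    have hm : Mono f := ses_mono hses
    exact hXY.2.2.1 (IsZero.of_mono_eq_zero f hf0).isoZero hB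
  -- `T₁ ⊆ T₁ ∗ X`
  have hsub1 : T₁ ⊆ star A T₁ X := fun T hT => ⟨T, 0, 𝟙 T, 0, ses_id_zero T, hT, h0X⟩
  -- `T₁ ∗ X ⊆ T₂`
  have hsub2 : star A T₁ X ⊆ T₂ := by
    rintro M ⟨B, C, f, g, hses, hB, hC⟩
    refine mem_left_of_orth h₂ (fun F' hF' φ => ?_)
    obtain ⟨ψ, hψ⟩ := ses_desc_s12 hses φ (h₂.2.2.1 B (h12 hB) F' hF' _)
    rw [← hψ, h₂.2.2.1 C (hXT₂ hC) F' hF' ψ, comp_zero]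
  -- the two classes are closed under isomorphisms
  have isoStar : ∀ P Q : Set A, IsoClosed A (star A P Q) := by
    intro P Q M M' e hM
    obtain ⟨B, C, f, g, hses, hB, hC⟩ := hM
    exact ⟨B, C, f ≫ e.hom, e.inv ≫ g, ses_of_iso hses e, hB, hC⟩
  -- orthogonality
  have hortho : ∀ M ∈ star A T₁ X, ∀ N ∈ star A Y F₂, ∀ φ : M ⟶ N, φ = 0 := by
    rintro M ⟨U, X', fU, gX, hM, hU, hX'⟩ N ⟨Y', V, fY, gV, hN, hY', hV⟩ φ
    obtain ⟨ψ, hψ⟩ := ses_desc_s12 hM (φ ≫ gV) (h₂.2.2.1 U (h12 hU) V hV _)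
    have hφgV : φ ≫ gV = 0 := by
      rw [← hψ, h₂.2.2.1 X' (hXT₂ hX') V hV ψ, comp_zero]
    obtain ⟨χ, hχ⟩ := ses_lift_s12 hN φ hφgV
    obtain ⟨ρ, hρ⟩ := ses_desc_s12 hM χ (h₁.2.2.1 U hU Y' (hYF₁ hY') _)
    rw [← hχ, ← hρ, hXY.2.2.2.2.1 X' hX' Y' hY' ρ, comp_zero, zero_comp]
  -- existence of the short exact sequence for every object
  have hdec : ∀ M : A, ∃ (B C : A) (f : B ⟶ M) (g : M ⟶ C),
      IsSES A f g ∧ B ∈ star A T₁ X ∧ C ∈ star A Y F₂ := by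
    intro M
    obtain ⟨T, F, i, p, hTM, hT, hF⟩ := h₂.2.2.2 M
    obtain ⟨U, H₀, u, q, hUT, hU, hH₀F₁⟩ := h₁.2.2.2 T
    have hqe : Epi q := ses_epi hUT
    have hH₀T₂ : H₀ ∈ T₂ := mem_left_of_orth h₂ (fun F' hF' φ => by
      have h0 : q ≫ φ = 0 := h₂.2.2.1 T hT F' hF' _
      exact (cancel_epi q).1 (by rw [h0, comp_zero]))
    obtain ⟨X₀, Y₀, x, r, hXH₀, hX₀, hY₀⟩ := hXY.2.2.2.2.2 H₀ ⟨hH₀T₂, hH₀F₁⟩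
    have hre : Epi r := ses_epi hXH₀
    have hqr : Epi (q ≫ r) := epi_comp _ _
    obtain ⟨u', t, hN⟩ := lemA hUT hXH₀
    have hKer : IsSES A (kernel.ι (q ≫ r)) (q ≫ r) := ses_kernel _
    have hi : Mono i := ses_mono hTM
    obtain ⟨j, e, hQ⟩ := lemB hKer hTM
    have hmono : Mono (kernel.ι (q ≫ r) ≫ i) := mono_comp _ _
    exact ⟨_, _, _, _, ses_cokernel (kernel.ι (q ≫ r) ≫ i),
      ⟨U, X₀, u', t, hN, hU, hX₀⟩, ⟨Y₀, F, j, e, hQ, hY₀, hF⟩⟩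
  exact ⟨⟨isoStar T₁ X, isoStar Y F₂, hortho, hdec⟩, hsub1, hsub2⟩
end

section
/- Let A be an abelian category, let t₁ = (T₁,F₁) and t₂ = (T₂,F₂) be torsion pairs in A with T₁ ⊆ T₂, and assume that F₁ and T₂ are functorially finite in A. Set H = T₂ ∩ F₁. Then: (1) if (T,F) is a torsion pair in A with T₁ ⊆ T ⊆ T₂ such that both T and F are functorially finite in A, then T ∩ F₁ and T₂ ∩ F are functorially finite in A; in particular, H is functorially finite in A. (2) If (X,Y) is a torsion pair in H such that X and Y are functorially finite in the full subcategory on H, then X and Y are functorially finite in A. -/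
open CategoryTheory Limits

universe v u

variable (A : Type u) [Category.{v} A] [Abelian A]

/-- `X` admits a right `C`-approximation: a morphism `f : C₀ ⟶ X` with `C₀ ∈ C` through
which every morphism from an object of `C` to `X` factors. -/
def HasRightApprox (C : Set A) (X : A) : Prop :=
  ∃ (C₀ : A) (f : C₀ ⟶ X), C₀ ∈ C ∧
    ∀ C' ∈ C, ∀ g : C' ⟶ X, ∃ h : C' ⟶ C₀, h ≫ f = g

/-- `X` admits a left `C`-approximation: a morphism `f : X ⟶ C₀` with `C₀ ∈ C` through
which every morphism from `X` to an object of `C` factors. -/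
def HasLeftApprox (C : Set A) (X : A) : Prop :=
  ∃ (C₀ : A) (f : X ⟶ C₀), C₀ ∈ C ∧
    ∀ C' ∈ C, ∀ g : X ⟶ C', ∃ h : C₀ ⟶ C', f ≫ h = g

/-- `C` is functorially finite in `A`: every object of `A` admits a right and a left
`C`-approximation. -/
def FunctoriallyFinite (C : Set A) : Prop :=
  ∀ X : A, HasRightApprox A C X ∧ HasLeftApprox A C X

/-- `C` is functorially finite in the full subcategory on `H`: every object of `H` admits
a right and a left `C`-approximation. -/
def FunctoriallyFiniteIn (H C : Set A) : Prop :=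
  ∀ X ∈ H, HasRightApprox A C X ∧ HasLeftApprox A C X

section Helpers

variable {A}

/-- A torsion-free class is closed under subobjects. -/
lemma torsionFree_sub {T F : Set A} (h : IsTorsionPair A T F) {S X : A} (m : S ⟶ X)
    (hm : Mono m) (hX : X ∈ F) : S ∈ F := by
  obtain ⟨hTiso, hFiso, hhom, hses⟩ := h
  obtain ⟨B, C, f, g, ⟨w, hse⟩, hB, hC⟩ := hses S
  haveI := hse.mono_f
  haveI := hse.epi_g
  haveI : Mono f := hse.mono_f
  haveI : Mono (f ≫ m) := mono_comp f m
  have hB0 : IsZero B := IsZero.of_mono_eq_zero (f ≫ m) (hhom B hB X hX _)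
  have hf0 : f = 0 := hB0.eq_of_src f 0
  haveI : Mono g := hse.exact.mono_g hf0
  haveI : IsIso g := isIso_of_mono_of_epi g
  exact hFiso (asIso g).symm hC

/-- A torsion class is closed under quotients. -/
lemma torsion_quot {T F : Set A} (h : IsTorsionPair A T F) {X Q : A} (p : X ⟶ Q)
    (hp : Epi p) (hX : X ∈ T) : Q ∈ T := by
  obtain ⟨hTiso, hFiso, hhom, hses⟩ := h
  obtain ⟨B, C, f, g, ⟨w, hse⟩, hB, hC⟩ := hses Q
  haveI := hse.mono_f
  haveI := hse.epi_g
  haveI : Epi g := hse.epi_g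
  haveI : Epi (p ≫ g) := epi_comp p g
  have hC0 : IsZero C := IsZero.of_epi_eq_zero (p ≫ g) (hhom X hX C hC _)
  have hg0 : g = 0 := hC0.eq_of_tgt g 0
  haveI : Epi f := hse.exact.epi_f hg0
  haveI : Mono f := hse.mono_f
  haveI : IsIso f := isIso_of_mono_of_epi f
  exact hTiso (asIso f) hB

/-- Key construction for right approximations by an intersection `T ∩ G`:
compose a right `G`-approximation with the torsion subobject of its source. -/
lemma hasRightApprox_inter {T F G : Set A} (htp : IsTorsionPair A T F)
    (hGsub : ∀ {S X : A} (m : S ⟶ X), Mono m → X ∈ G → S ∈ G)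
    (M : A) (hM : HasRightApprox A G M) : HasRightApprox A (T ∩ G) M := by
  obtain ⟨hTiso, hFiso, hhom, hses⟩ := htp
  obtain ⟨F₀, a, hF₀, ha⟩ := hM
  obtain ⟨B, C, f, g, ⟨w, hse⟩, hB, hC⟩ := hses F₀
  haveI : Mono f := hse.mono_f
  refine ⟨B, f ≫ a, ⟨hB, hGsub f ‹Mono f› hF₀⟩, ?_⟩
  rintro E ⟨hET, hEG⟩ u
  obtain ⟨h, hh⟩ := ha E hEG u
  have h0 : h ≫ g = 0 := hhom E hET C hC _
  refine ⟨hse.exact.lift h h0, ?_⟩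
  rw [← Category.assoc]
  have : hse.exact.lift h h0 ≫ f = h := hse.exact.lift_f h h0
  rw [this, hh]

/-- Key construction for left approximations by an intersection `G ∩ F`:
compose a left `G`-approximation with the torsion-free quotient of its target. -/
lemma hasLeftApprox_inter {T F G : Set A} (htp : IsTorsionPair A T F)
    (hGquot : ∀ {X Q : A} (p : X ⟶ Q), Epi p → X ∈ G → Q ∈ G)
    (M : A) (hM : HasLeftApprox A G M) : HasLeftApprox A (G ∩ F) M := by
  obtain ⟨hTiso, hFiso, hhom, hses⟩ := htp
  obtain ⟨T₀, a, hT₀, ha⟩ := hM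
  obtain ⟨B, C, f, g, ⟨w, hse⟩, hB, hC⟩ := hses T₀
  haveI : Epi g := hse.epi_g
  refine ⟨C, a ≫ g, ⟨hGquot g ‹Epi g› hT₀, hC⟩, ?_⟩
  rintro E ⟨hEG, hEF⟩ u
  obtain ⟨h, hh⟩ := ha E hEG u
  have h0 : f ≫ h = 0 := hhom B hB E hEF _
  refine ⟨hse.exact.desc h h0, ?_⟩
  rw [Category.assoc]
  have : g ≫ hse.exact.desc h h0 = h := hse.exact.g_desc h h0
  rw [this, hh]

lemma hasRightApprox_trans {H C : Set A} (hCH : C ⊆ H) {M : A}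
    (hH : HasRightApprox A H M) (hC : ∀ X ∈ H, HasRightApprox A C X) :
    HasRightApprox A C M := by
  obtain ⟨H₀, a, hH₀, ha⟩ := hH
  obtain ⟨C₀, b, hC₀, hb⟩ := hC H₀ hH₀
  refine ⟨C₀, b ≫ a, hC₀, fun E hE g => ?_⟩
  obtain ⟨h, hh⟩ := ha E (hCH hE) g
  obtain ⟨k, hk⟩ := hb E hE h
  exact ⟨k, by rw [← Category.assoc, hk, hh]⟩

lemma hasLeftApprox_trans {H C : Set A} (hCH : C ⊆ H) {M : A}
    (hH : HasLeftApprox A H M) (hC : ∀ X ∈ H, HasLeftApprox A C X) :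
    HasLeftApprox A C M := by
  obtain ⟨H₀, a, hH₀, ha⟩ := hH
  obtain ⟨C₀, b, hC₀, hb⟩ := hC H₀ hH₀
  refine ⟨C₀, a ≫ b, hC₀, fun E hE g => ?_⟩
  obtain ⟨h, hh⟩ := ha E (hCH hE) g
  obtain ⟨k, hk⟩ := hb E hE h
  exact ⟨k, by rw [Category.assoc, hk, hh]⟩

end Helpers

/-- functorial finiteness and hearts.
Let `t₁ = (T₁, F₁) ≤ t₂ = (T₂, F₂)` be torsion pairs in `A` with `F₁` and `T₂` functorially
finite, and `H = T₂ ∩ F₁`.  (1) If `(T, F)` is a functorially finite torsion pair with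
`T₁ ⊆ T ⊆ T₂`, then `T ∩ F₁` and `T₂ ∩ F` are functorially finite in `A`; in particular
`H` is functorially finite in `A`.  (2) If `(X, Y)` is a torsion pair in `H` with `X` and
`Y` functorially finite in the full subcategory on `H`, then `X` and `Y` are functorially
finite in `A`. -/
theorem stmt14 (T₁ F₁ T₂ F₂ : Set A)
    (h₁ : IsTorsionPair A T₁ F₁) (h₂ : IsTorsionPair A T₂ F₂) (h12 : T₁ ⊆ T₂)
    (hF₁ : FunctoriallyFinite A F₁) (hT₂ : FunctoriallyFinite A T₂) :
    ((∀ T F : Set A, IsTorsionPair A T F → T₁ ⊆ T → T ⊆ T₂ →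
      FunctoriallyFinite A T → FunctoriallyFinite A F →
      FunctoriallyFinite A (T ∩ F₁) ∧ FunctoriallyFinite A (T₂ ∩ F)) ∧
     FunctoriallyFinite A (T₂ ∩ F₁)) ∧
    (∀ X Y : Set A, IsTorsionPairIn A (T₂ ∩ F₁) X Y →
      FunctoriallyFiniteIn A (T₂ ∩ F₁) X → FunctoriallyFiniteIn A (T₂ ∩ F₁) Y →
      FunctoriallyFinite A X ∧ FunctoriallyFinite A Y) := by
  have hHff : FunctoriallyFinite A (T₂ ∩ F₁) := fun M =>
    ⟨hasRightApprox_inter h₂ (fun m hm hX => torsionFree_sub h₁ m hm hX) M (hF₁ M).1,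
     hasLeftApprox_inter h₁ (fun p hp hX => torsion_quot h₂ p hp hX) M (hT₂ M).2⟩
  refine ⟨⟨fun T F htp hT₁T hTT₂ hTff hFff => ?_, hHff⟩, fun X Y hXY hXff hYff => ?_⟩
  · constructor
    · intro M
      exact ⟨hasRightApprox_inter htp (fun m hm hX => torsionFree_sub h₁ m hm hX) M (hF₁ M).1,
        hasLeftApprox_inter h₁ (fun p hp hX => torsion_quot htp p hp hX) M (hTff M).2⟩
    · intro M
      exact ⟨hasRightApprox_inter h₂ (fun m hm hX => torsionFree_sub htp m hm hX) M (hFff M).1,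
        hasLeftApprox_inter htp (fun p hp hX => torsion_quot h₂ p hp hX) M (hT₂ M).2⟩
  · obtain ⟨hXH, hYH, _, _, _, _⟩ := hXY
    constructor
    · intro M
      exact ⟨hasRightApprox_trans hXH (hHff M).1 (fun X₀ hX₀ => (hXff X₀ hX₀).1),
        hasLeftApprox_trans hXH (hHff M).2 (fun X₀ hX₀ => (hXff X₀ hX₀).2)⟩
    · intro M
      exact ⟨hasRightApprox_trans hYH (hHff M).1 (fun X₀ hX₀ => (hYff X₀ hX₀).1),
        hasLeftApprox_trans hYH (hHff M).2 (fun X₀ hX₀ => (hYff X₀ hX₀).2)⟩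
end
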